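/- arXiv:1407.4626 — 4 statements merged into one kernel-verified Lean document; each statement's English description precedes it below -/
import Mathlib

section
/- Let A be an n×n Boolean matrix with weight |A| ≥ 2n^{3/2}. Then the number of 2-rectangles in A (pairs of distinct rows and pairs of distinct columns at whose four intersections A has ones) is at least σ²/(2n²) where σ = Σ_i C(a_i, 2), and hence is at least |A|⁴/(32 n⁴) (in particular Ω((|A|/n)⁴)). -/
open Finset

/-- Weight of a Boolean matrix: the number of entries equal to `true` (ones). -/
def weight {α β : Type} [Fintype α] [Fintype β] (M : α → β → Bool) : ℕ :=
  (Finset.univ.filter (fun p : α × β => M p.1 p.2 = true)).card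

/-- Number of ones in row `i` of the matrix `M`. -/
def rowOnes {α β : Type} [Fintype β] (M : α → β → Bool) (i : α) : ℕ :=
  (Finset.univ.filter (fun j => M i j = true)).card

/-- A matrix is `k`-free if it contains no all-ones `k × k` submatrix. -/
def kFree {α β : Type} (M : α → β → Bool) (k : ℕ) : Prop :=
  ¬ ∃ (R : Finset α) (C : Finset β), R.card = k ∧ C.card = k ∧
      ∀ i ∈ R, ∀ j ∈ C, M i j = true

/-- The 2-element subsets of `{1, …, m}` (realized as `Fin m`). -/
abbrev Pairs (m : ℕ) := {s : Finset (Fin m) // s.card = 2}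

/-- The derived matrix `B`, indexed by 2-element subsets: `B[a,b] = 1` iff the
`2 × 2` submatrix of `A` with row set `a` and column set `b` is all ones. -/
def derivedB {m : ℕ} (A : Fin m → Fin m → Bool) (a b : Pairs m) : Bool :=
  decide (∀ i ∈ a.1, ∀ j ∈ b.1, A i j = true)

/-- A rectifier circuit with outputs indexed by `α` and inputs indexed by `β`:
a finite DAG together with a choice of an input vertex for each `β` and an
output vertex for each `α`. Complexity is the number of edges. -/
structure RectCircuit (α β : Type) where
  V : ℕ
  edges : Finset (Fin V × Fin V)
  inputs : β → Fin V
  outputs : α → Fin V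
  acyclic : ∀ v : Fin V, ¬ Relation.TransGen (fun u w => (u, w) ∈ edges) v v

/-- A rectifier circuit implements `M` iff `M i j = 1` exactly when there is a
directed path from input `j` to output `i`. -/
def RectCircuit.implements {α β : Type} (C : RectCircuit α β) (M : α → β → Bool) : Prop :=
  ∀ i j, M i j = true ↔
    Relation.ReflTransGen (fun u w => (u, w) ∈ C.edges) (C.inputs j) (C.outputs i)

/-- A circuit has depth at most `d` if every directed path has at most `d` edges. -/
def RectCircuit.depthLE {α β : Type} (C : RectCircuit α β) (d : ℕ) : Prop :=
  ∀ (f : ℕ → Fin C.V) (L : ℕ), (∀ i < L, (f i, f (i + 1)) ∈ C.edges) → L ≤ d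

/-- `OR(M)`: the minimal number of edges of a rectifier circuit implementing `M`. -/
noncomputable def ORc {α β : Type} (M : α → β → Bool) : ℕ :=
  sInf {k | ∃ C : RectCircuit α β, C.implements M ∧ C.edges.card = k}

/-- `OR_d(M)`: the minimal number of edges of a depth-`d` rectifier circuit
implementing `M`. -/
noncomputable def ORd {α β : Type} (d : ℕ) (M : α → β → Bool) : ℕ :=
  sInf {k | ∃ C : RectCircuit α β, C.implements M ∧ C.depthLE d ∧ C.edges.card = k}

lemma nat_sq_eq (k : ℕ) : k ^ 2 = 2 * k.choose 2 + k := by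
  induction k with
  | zero => rfl
  | succ m ih =>
    rw [Nat.choose_succ_succ, Nat.choose_one_right]
    nlinarith [ih]

lemma pairs_subset_card {n : ℕ} (S : Finset (Fin n)) :
    (univ.filter (fun a : Pairs n => a.1 ⊆ S)).card = S.card.choose 2 := by
  rw [← Finset.card_powersetCard 2 S]
  apply Finset.card_bij (fun a _ => a.1)
  · intro a ha
    rw [Finset.mem_powersetCard]
    exact ⟨(Finset.mem_filter.mp ha).2, a.2⟩
  · intro a _ b _ hab
    exact Subtype.ext hab
  · intro t ht
    rw [Finset.mem_powersetCard] at ht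
    exact ⟨⟨t, ht.2⟩, Finset.mem_filter.mpr ⟨Finset.mem_univ _, ht.1⟩, rfl⟩

lemma weight_eq_sum_rowOnes {n : ℕ} (A : Fin n → Fin n → Bool) :
    weight A = ∑ i, rowOnes A i := by
  rw [weight, Finset.card_filter, Fintype.sum_prod_type]
  exact Finset.sum_congr rfl fun i _ => by rw [rowOnes, Finset.card_filter]

lemma weight_derivedB_eq {n : ℕ} (A : Fin n → Fin n → Bool) :
    weight (derivedB A) =
      ∑ b : Pairs n,
        ((univ.filter (fun i : Fin n => ∀ j ∈ b.1, A i j = true)).card).choose 2 := by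
  rw [weight, Finset.card_filter, Fintype.sum_prod_type, Finset.sum_comm]
  refine Finset.sum_congr rfl fun b _ => ?_
  rw [← Finset.card_filter]
  rw [show (univ.filter fun a : Pairs n => derivedB A a b = true)
      = univ.filter fun a : Pairs n =>
          a.1 ⊆ univ.filter (fun i : Fin n => ∀ j ∈ b.1, A i j = true) from
    Finset.filter_congr fun a _ => by
      simp [derivedB, Finset.subset_iff]]
  exact pairs_subset_card _

lemma sum_cover_eq_sigma {n : ℕ} (A : Fin n → Fin n → Bool) :
    (∑ b : Pairs n, (univ.filter (fun i : Fin n => ∀ j ∈ b.1, A i j = true)).card)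
      = ∑ i, (rowOnes A i).choose 2 := by
  simp_rw [Finset.card_filter]
  rw [Finset.sum_comm]
  refine Finset.sum_congr rfl fun i _ => ?_
  rw [← Finset.card_filter]
  rw [show (univ.filter fun b : Pairs n => ∀ j ∈ b.1, A i j = true)
      = univ.filter fun b : Pairs n => b.1 ⊆ univ.filter (fun j : Fin n => A i j = true) from
    Finset.filter_congr fun b _ => by simp [Finset.subset_iff]]
  rw [pairs_subset_card, rowOnes]

set_option maxHeartbeats 2000000 in
/-- If `|A| ≥ 2 n^{3/2}`, then the number of 2-rectangles of `A`
(the weight of the derived matrix `B`) is at least `σ²/(2n²)` where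
`σ = ∑_i C(a_i, 2)`, hence at least `|A|⁴/(32 n⁴)`. -/
theorem stmt3 (n : ℕ) (A : Fin n → Fin n → Bool)
    (h : (weight A : ℝ) ≥ 2 * (n : ℝ) ^ ((3 : ℝ) / 2)) :
    (weight (derivedB A) : ℝ) ≥
        ((∑ i, Nat.choose (rowOnes A i) 2 : ℕ) : ℝ) ^ 2 / (2 * (n : ℝ) ^ 2) ∧
    (weight (derivedB A) : ℝ) ≥ (weight A : ℝ) ^ 4 / (32 * (n : ℝ) ^ 4) := by
  rcases Nat.eq_zero_or_pos n with hn | hn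
  · subst hn
    have hz : (2 : ℝ) * ((0:ℕ) : ℝ) ^ 2 = 0 := by norm_num
    have hz4 : (32 : ℝ) * ((0:ℕ) : ℝ) ^ 4 = 0 := by norm_num
    constructor
    · rw [ge_iff_le, hz, div_zero]
      positivity
    · rw [ge_iff_le, hz4, div_zero]
      positivity
  -- notation
  set bcov : Pairs n → ℕ :=
    fun u => (univ.filter (fun i : Fin n => ∀ j ∈ u.1, A i j = true)).card with hbcov
  set σn : ℕ := ∑ i, Nat.choose (rowOnes A i) 2 with hσn
  have hWsum : weight (derivedB A) = ∑ u : Pairs n, (bcov u).choose 2 := weight_derivedB_eq A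
  have hσsum : ∑ u : Pairs n, bcov u = σn := sum_cover_eq_sigma A
  have hwsum : weight A = ∑ i, rowOnes A i := weight_eq_sum_rowOnes A
  -- nat identities
  have f1 : ∑ i, (rowOnes A i) ^ 2 = 2 * σn + weight A := by
    rw [hσn, hwsum, Finset.mul_sum, ← Finset.sum_add_distrib]
    exact Finset.sum_congr rfl fun i _ => nat_sq_eq _
  have f2 : ∑ u : Pairs n, (bcov u) ^ 2 = 2 * weight (derivedB A) + σn := by
    rw [hWsum, ← hσsum, Finset.mul_sum, ← Finset.sum_add_distrib]
    exact Finset.sum_congr rfl fun u _ => nat_sq_eq _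
  have f3 : 2 * Nat.choose n 2 ≤ n ^ 2 := by
    have := nat_sq_eq n; omega
  have f4 : (Finset.univ : Finset (Pairs n)).card = Nat.choose n 2 := by
    rw [Finset.card_univ]
    simpa using Fintype.card_finset_len (α := Fin n) 2
  -- real abbreviations
  set w : ℝ := (weight A : ℝ) with hw
  set W : ℝ := (weight (derivedB A) : ℝ) with hWr
  set σ : ℝ := ((σn : ℕ) : ℝ) with hσr
  have hn0 : (0 : ℝ) < n := by exact_mod_cast hn
  have hn1 : (1 : ℝ) ≤ n := by exact_mod_cast hn
  have hwnn : 0 ≤ w := Nat.cast_nonneg _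
  have hWnn : 0 ≤ W := Nat.cast_nonneg _
  have hσnn : 0 ≤ σ := Nat.cast_nonneg _
  -- Cauchy–Schwarz on rows
  have R1 : w ^ 2 ≤ n * (2 * σ + w) := by
    have cs := sq_sum_le_card_mul_sum_sq (s := (univ : Finset (Fin n)))
      (f := fun i => ((rowOnes A i : ℝ)))
    have e1 : (∑ i, ((rowOnes A i : ℝ))) = w := by rw [hw, hwsum]; push_cast; ring
    have e2 : (∑ i, ((rowOnes A i : ℝ)) ^ 2) = 2 * σ + w := by
      have := congrArg (fun k : ℕ => (k : ℝ)) f1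
      push_cast at this
      rw [hσr, hw]; exact this
    rw [e1, e2] at cs
    simpa using cs
  -- Cauchy–Schwarz on column pairs
  have R2 : 2 * σ ^ 2 ≤ (n : ℝ) ^ 2 * (2 * W + σ) := by
    have cs := sq_sum_le_card_mul_sum_sq (s := (univ : Finset (Pairs n)))
      (f := fun u => ((bcov u : ℝ)))
    have e1 : (∑ u : Pairs n, ((bcov u : ℝ))) = σ := by rw [hσr, ← hσsum]; push_cast; ring
    have e2 : (∑ u : Pairs n, ((bcov u : ℝ)) ^ 2) = 2 * W + σ := by
      have := congrArg (fun k : ℕ => (k : ℝ)) f2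
      push_cast at this
      rw [hWr, hσr]; exact this
    rw [e1, e2, f4] at cs
    have hNle : (2 : ℝ) * (Nat.choose n 2 : ℝ) ≤ (n : ℝ) ^ 2 := by exact_mod_cast f3
    have hpos : (0 : ℝ) ≤ 2 * W + σ := by positivity
    nlinarith [cs, mul_le_mul_of_nonneg_right hNle hpos]
  -- from hypothesis
  set t : ℝ := (n : ℝ) ^ ((3 : ℝ) / 2) with htdef
  have htn : (n : ℝ) ≤ t := by
    rw [htdef]
    calc (n : ℝ) = (n : ℝ) ^ (1 : ℝ) := (Real.rpow_one _).symm
    _ ≤ (n : ℝ) ^ ((3 : ℝ) / 2) := Real.rpow_le_rpow_of_exponent_le hn1 (by norm_num)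
  have ht2 : t * t = (n : ℝ) ^ 3 := by
    rw [htdef, ← Real.rpow_add hn0]
    norm_num
  have hw2n : w ≥ 2 * n := by nlinarith [h, htn]
  have hwsq : w ^ 2 ≥ 4 * (n : ℝ) ^ 3 := by nlinarith [h, ht2, htn, hn0]
  have hσ1 : w ^ 2 ≤ 4 * n * σ := by nlinarith [R1, hw2n, hwnn, hn0]
  have hσ2 : σ ≥ (n : ℝ) ^ 2 := by nlinarith [hσ1, hwsq, hn0]
  have hW1 : σ ^ 2 ≤ 2 * (n : ℝ) ^ 2 * W := by nlinarith [R2, hσ2, hσnn, hn0]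
  constructor
  · rw [ge_iff_le, div_le_iff₀ (by positivity)]
    push_cast
    linarith [hW1]
  · rw [ge_iff_le, div_le_iff₀ (by positivity)]
    nlinarith [hW1, hσ1, sq_nonneg w, hσnn, hn0, hWnn,
      mul_le_mul hσ1 hσ1 (sq_nonneg w) (by positivity),
      mul_le_mul_of_nonneg_left hW1 (by positivity : (0:ℝ) ≤ 16 * (n:ℝ)^2)]
end

section
/- Let A be an m×m Boolean matrix and let n = C(m,2). Define the n×n Boolean matrix B, indexed by 2-element subsets of {1,...,m}, by B[a,b] = 1 iff the 2×2 submatrix of A with row set a and column set b is all ones (i.e., a × b is a 2-rectangle of A, with a indexing rows and b indexing columns). If A is k-free (contains no all-ones k×k submatrix), then B is K-free for K = C(k−1, 2) + 1. -/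
open Finset

-- Helper lemma
lemma aux_card {m k : ℕ} (hk : 1 ≤ k) (R : Finset (Pairs m))
    (hR : R.card = (k - 1).choose 2 + 1) : k ≤ (R.sup (·.1)).card := by
  by_contra hlt
  push_neg at hlt
  set S := R.sup (fun a : Pairs m => a.1)
  have hsub : R.image (·.1) ⊆ S.powersetCard 2 := by
    intro s hs
    simp only [Finset.mem_image] at hs
    obtain ⟨a, ha, rfl⟩ := hs
    exact Finset.mem_powersetCard.2 ⟨Finset.le_sup ha, a.2⟩
  have hcard : (R.image (·.1)).card = R.card :=
    Finset.card_image_of_injective _ Subtype.val_injective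
  have hle := Finset.card_le_card hsub
  rw [hcard, hR, Finset.card_powersetCard] at hle
  have h2 : S.card.choose 2 ≤ (k - 1).choose 2 :=
    Nat.choose_le_choose 2 (by omega)
  omega

/-- If `A` is `k`-free, then the derived matrix `B` is `K`-free
for `K = C(k−1, 2) + 1`. -/
theorem stmt7 (m k : ℕ) (A : Fin m → Fin m → Bool) (h : kFree A k) :
    kFree (derivedB A) ((k - 1).choose 2 + 1) := by
  rcases Nat.eq_zero_or_pos k with rfl | hk
  · exact absurd ⟨∅, ∅, rfl, rfl, by simp⟩ h
  rintro ⟨R, C, hR, hC, hB⟩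
  apply h
  set S : Finset (Fin m) := R.sup (·.1) with hS
  set T : Finset (Fin m) := C.sup (·.1) with hT
  have hall : ∀ i ∈ S, ∀ j ∈ T, A i j = true := by
    intro i hi j hj
    obtain ⟨a, ha, hia⟩ := Finset.mem_sup.1 hi
    obtain ⟨b, hb, hjb⟩ := Finset.mem_sup.1 hj
    have hab := hB a ha b hb
    simp only [derivedB, decide_eq_true_eq] at hab
    exact hab i hia j hjb
  obtain ⟨S', hS'sub, hS'⟩ := Finset.exists_subset_card_eq (s := S) (n := k) (aux_card hk R hR)
  obtain ⟨T', hT'sub, hT'⟩ := Finset.exists_subset_card_eq (s := T) (n := k) (aux_card hk C hC)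
  exact ⟨S', T', hS', hT', fun i hi j hj => hall i (hS'sub hi) j (hT'sub hj)⟩
end

section
/- Let A be an m×m Boolean matrix, n = C(m,2), and B the n×n matrix indexed by 2-element subsets of {1,...,m} with B[a,b]=1 iff rows a and columns b of A form an all-ones 2×2 submatrix. Then the complement matrix B̄ can be implemented by a depth-3 rectifier circuit with O(m²) = O(n) edges; in particular OR_3(B̄) = O(n). -/
open Finset

namespace Stmt10Aux

abbrev Node (m : ℕ) := (Pairs m ⊕ Fin m) ⊕ (Fin m ⊕ Pairs m)

def rk {m : ℕ} : Node m → ℕ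
  | .inl (.inl _) => 0
  | .inl (.inr _) => 1
  | .inr (.inl _) => 2
  | .inr (.inr _) => 3

def EB {m : ℕ} (A : Fin m → Fin m → Bool) : Node m → Node m → Bool
  | .inl (.inl b), .inl (.inr j) => decide (j ∈ b.1)
  | .inl (.inr j), .inr (.inl i) => !A i j
  | .inr (.inl i), .inr (.inr a) => decide (i ∈ a.1)
  | _, _ => false

variable {m N : ℕ} {A : Fin m → Fin m → Bool}

def edgesC (e : Node m ≃ Fin N) (A : Fin m → Fin m → Bool) : Finset (Fin N × Fin N) :=
  (univ.filter (fun p : Node m × Node m => EB A p.1 p.2)).image (fun p => (e p.1, e p.2))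

lemma mem_edgesC {e : Node m ≃ Fin N} {x y : Fin N} :
    (x, y) ∈ edgesC e A ↔ EB A (e.symm x) (e.symm y) = true := by
  unfold edgesC
  simp only [Finset.mem_image, Finset.mem_filter, Finset.mem_univ, true_and, Prod.mk.injEq]
  constructor
  · rintro ⟨⟨u, w⟩, h, h1, h2⟩
    subst h1; subst h2
    rw [Equiv.symm_apply_apply, Equiv.symm_apply_apply]
    exact h
  · intro h
    exact ⟨(e.symm x, e.symm y), h, e.apply_symm_apply x, e.apply_symm_apply y⟩

lemma rk_step {e : Node m ≃ Fin N} {x y : Fin N}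
    (h : (x, y) ∈ edgesC e A) : rk (e.symm x) < rk (e.symm y) := by
  have h' := mem_edgesC.mp h
  rcases hx : e.symm x with (b|j)|(i|a) <;> rcases hy : e.symm y with (b'|j')|(i'|a') <;>
    rw [hx, hy] at h' <;> simp [EB, rk] at h' ⊢

lemma rk_trans {e : Node m ≃ Fin N} {x y : Fin N}
    (h : Relation.TransGen (fun u w => (u, w) ∈ edgesC e A) x y) :
    rk (e.symm x) < rk (e.symm y) := by
  induction h with
  | single h => exact rk_step h
  | tail _ h ih => exact ih.trans (rk_step h)

def circ (e : Node m ≃ Fin N) (A : Fin m → Fin m → Bool) : RectCircuit (Pairs m) (Pairs m) where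
  V := N
  edges := edgesC e A
  inputs b := e (.inl (.inl b))
  outputs a := e (.inr (.inr a))
  acyclic := fun _ hv => lt_irrefl _ (rk_trans hv)

lemma rk_le (u : Node m) : rk u ≤ 3 := by
  rcases u with (b|j)|(i|a) <;> simp [rk]

lemma depth3 (e : Node m ≃ Fin N) (A : Fin m → Fin m → Bool) : (circ e A).depthLE 3 := by
  intro f L hf
  have key : ∀ k, k ≤ L → k ≤ rk (e.symm (f k)) := by
    intro k hk
    induction k with
    | zero => exact Nat.zero_le _
    | succ k ih =>
      have h1 := rk_step (hf k (by omega))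
      have h2 := ih (by omega)
      omega
  have := (key L le_rfl).trans (rk_le _)
  omega

lemma derived_iff (A : Fin m → Fin m → Bool) (a b : Pairs m) :
    (!derivedB A a b) = true ↔ ∃ i ∈ a.1, ∃ j ∈ b.1, A i j = false := by
  simp [derivedB]

lemma impl (e : Node m ≃ Fin N) (A : Fin m → Fin m → Bool) :
    (circ e A).implements (fun a b => !derivedB A a b) := by
  intro a b
  rw [derived_iff]
  show _ ↔ Relation.ReflTransGen (fun u w => (u, w) ∈ edgesC e A)
    (e (.inl (.inl b))) (e (.inr (.inr a)))
  constructor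
  · rintro ⟨i, hi, j, hj, hA⟩
    refine Relation.ReflTransGen.head (b := e (.inl (.inr j))) ?_
      (Relation.ReflTransGen.head (b := e (.inr (.inl i))) ?_
        (Relation.ReflTransGen.single ?_))
    · exact mem_edgesC.mpr (by
        rw [Equiv.symm_apply_apply, Equiv.symm_apply_apply]; simp [EB, hj])
    · exact mem_edgesC.mpr (by
        rw [Equiv.symm_apply_apply, Equiv.symm_apply_apply]; simp [EB, hA])
    · exact mem_edgesC.mpr (by
        rw [Equiv.symm_apply_apply, Equiv.symm_apply_apply]; simp [EB, hi])
  · intro h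
    rcases h.cases_head with heq | ⟨c, hc, h⟩
    · have := e.injective heq; simp at this
    · have hc' := mem_edgesC.mp hc
      rw [Equiv.symm_apply_apply] at hc'
      rcases h1 : e.symm c with (b'|j)|(i|a') <;> rw [h1] at hc' <;>
        simp [EB] at hc'
      have hceq : c = e (.inl (.inr j)) := by
        rw [← h1, Equiv.apply_symm_apply]
      rw [hceq] at h
      rcases h.cases_head with heq | ⟨c2, hc2, h⟩
      · have := e.injective heq; simp at this
      · have hc2' := mem_edgesC.mp hc2
        rw [Equiv.symm_apply_apply] at hc2'
        rcases h2 : e.symm c2 with (b'|j')|(i|a') <;> rw [h2] at hc2' <;>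
          simp [EB] at hc2'
        have hc2eq : c2 = e (.inr (.inl i)) := by
          rw [← h2, Equiv.apply_symm_apply]
        rw [hc2eq] at h
        rcases h.cases_head with heq | ⟨c3, hc3, h⟩
        · have := e.injective heq; simp at this
        · have hc3' := mem_edgesC.mp hc3
          rw [Equiv.symm_apply_apply] at hc3'
          rcases h3 : e.symm c3 with (b'|j')|(i'|a') <;> rw [h3] at hc3' <;>
            simp [EB] at hc3'
          have hc3eq : c3 = e (.inr (.inr a')) := by
            rw [← h3, Equiv.apply_symm_apply]
          rw [hc3eq] at h
          rcases h.cases_head with heq | ⟨c4, hc4, h⟩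
          · have := e.injective heq
            simp only [Sum.inr.injEq] at this
            subst this
            exact ⟨i, hc3', j, hc', hc2'⟩
          · have hc4' := mem_edgesC.mp hc4
            rw [Equiv.symm_apply_apply] at hc4'
            rcases h4 : e.symm c4 with (b'|j')|(i'|a'') <;> rw [h4] at hc4' <;>
              simp [EB] at hc4'

lemma pairs_containing (i : Fin m) :
    (univ.filter fun a : Pairs m => i ∈ a.1).card ≤ m := by
  classical
  have h := Finset.card_le_card_of_injOn (f := fun a : Pairs m => a.1.erase i)
    (t := (univ : Finset (Fin m)).image (fun j => ({j} : Finset (Fin m))))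
    (s := univ.filter fun a : Pairs m => i ∈ a.1) ?_ ?_
  · calc (univ.filter fun a : Pairs m => i ∈ a.1).card
        ≤ ((univ : Finset (Fin m)).image (fun j => ({j} : Finset (Fin m)))).card := h
      _ ≤ (univ : Finset (Fin m)).card := Finset.card_image_le
      _ = m := by simp
  · intro a ha
    simp only [Finset.coe_filter, Set.mem_setOf_eq, Finset.mem_filter, Finset.mem_univ, true_and] at ha
    have hcard : (a.1.erase i).card = 1 := by
      rw [Finset.card_erase_of_mem ha, a.2]
    obtain ⟨j, hj⟩ := Finset.card_eq_one.mp hcard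
    exact Finset.mem_image.mpr ⟨j, Finset.mem_univ j, hj.symm⟩
  · intro a ha a' ha' hee
    simp only [Finset.coe_filter, Set.mem_setOf_eq, Finset.mem_univ, true_and] at ha ha'
    have hee' : (a.1 : Finset (Fin m)).erase i = (a'.1 : Finset (Fin m)).erase i := hee
    apply Subtype.ext
    rw [← Finset.insert_erase ha, ← Finset.insert_erase ha', hee']

def odeg (m : ℕ) : Node m → ℕ
  | .inl (.inl _) => 2
  | .inl (.inr _) => m
  | .inr (.inl _) => m
  | .inr (.inr _) => 0

lemma outdeg_le (A : Fin m → Fin m → Bool) (u : Node m) :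
    (univ.filter fun w : Node m => EB A u w = true).card ≤ odeg m u := by
  rcases u with (b|j)|(i|a)
  · calc (univ.filter fun w : Node m => EB A (.inl (.inl b)) w = true).card
        ≤ (b.1.image (fun j => (.inl (.inr j) : Node m))).card := by
          apply Finset.card_le_card
          intro w hw
          simp only [Finset.mem_filter, Finset.mem_univ, true_and] at hw
          rcases w with (b'|j)|(i|a') <;> simp [EB] at hw
          exact Finset.mem_image.mpr ⟨j, hw, rfl⟩
      _ ≤ b.1.card := Finset.card_image_le
      _ = 2 := b.2
  · calc (univ.filter fun w : Node m => EB A (.inl (.inr j)) w = true).card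
        ≤ ((univ : Finset (Fin m)).image (fun i => (.inr (.inl i) : Node m))).card := by
          apply Finset.card_le_card
          intro w hw
          simp only [Finset.mem_filter, Finset.mem_univ, true_and] at hw
          rcases w with (b'|j')|(i|a') <;> simp [EB] at hw
          exact Finset.mem_image.mpr ⟨i, Finset.mem_univ i, rfl⟩
      _ ≤ (univ : Finset (Fin m)).card := Finset.card_image_le
      _ = m := by simp
  · calc (univ.filter fun w : Node m => EB A (.inr (.inl i)) w = true).card
        ≤ (((univ.filter fun a : Pairs m => i ∈ a.1)).image
            (fun a => (.inr (.inr a) : Node m))).card := by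
          apply Finset.card_le_card
          intro w hw
          simp only [Finset.mem_filter, Finset.mem_univ, true_and] at hw
          rcases w with (b'|j')|(i'|a') <;> simp [EB] at hw
          exact Finset.mem_image.mpr ⟨a', Finset.mem_filter.mpr ⟨Finset.mem_univ a', hw⟩, rfl⟩
      _ ≤ (univ.filter fun a : Pairs m => i ∈ a.1).card := Finset.card_image_le
      _ ≤ m := pairs_containing i
  · simp only [odeg, Nat.le_zero, Finset.card_eq_zero]
    apply Finset.filter_eq_empty_iff.mpr
    intro w _
    rcases w with (b'|j')|(i'|a') <;> simp [EB]

lemma card_pairs (m : ℕ) : Fintype.card (Pairs m) ≤ m ^ 2 := by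
  have h1 : Fintype.card (Pairs m) = Nat.choose m 2 := by
    simpa using Fintype.card_finset_len (α := Fin m) 2
  rw [h1, Nat.choose_two_right]
  calc m * (m - 1) / 2 ≤ m * (m - 1) := Nat.div_le_self _ _
    _ ≤ m * m := Nat.mul_le_mul_left _ (Nat.sub_le _ _)
    _ = m ^ 2 := (sq m).symm

lemma card_edges (e : Node m ≃ Fin N) (A : Fin m → Fin m → Bool) :
    (edgesC e A).card ≤ 4 * m ^ 2 := by
  classical
  have h0 : (edgesC e A).card ≤
      (univ.filter (fun p : Node m × Node m => EB A p.1 p.2)).card :=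
    Finset.card_image_le
  have hsub : (univ.filter (fun p : Node m × Node m => EB A p.1 p.2)) ⊆
      (univ : Finset (Node m)).biUnion
        (fun u => (univ.filter fun w : Node m => EB A u w = true).image (fun w => (u, w))) := by
    intro p hp
    obtain ⟨p1, p2⟩ := p
    rw [Finset.mem_filter] at hp
    exact Finset.mem_biUnion.mpr ⟨p1, Finset.mem_univ _, Finset.mem_image.mpr
      ⟨p2, Finset.mem_filter.mpr ⟨Finset.mem_univ _, hp.2⟩, rfl⟩⟩
  have h1 := (Finset.card_le_card hsub).trans Finset.card_biUnion_le
  have h2 : ∑ u : Node m, ((univ.filter fun w : Node m => EB A u w = true).image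
      (fun w => (u, w))).card ≤ ∑ u : Node m, odeg m u := by
    apply Finset.sum_le_sum
    intro u _
    exact Finset.card_image_le.trans (outdeg_le A u)
  have h3 : ∑ u : Node m, odeg m u = 2 * Fintype.card (Pairs m) + m * m + m * m := by
    rw [Fintype.sum_sum_type, Fintype.sum_sum_type, Fintype.sum_sum_type]
    simp [odeg, Finset.sum_const, Finset.card_univ, mul_comm]
    try ring
  have hp := card_pairs m
  have hm : m * m ≤ m ^ 2 := le_of_eq (sq m).symm
  omega

end Stmt10Aux

/-- The complement of the derived matrix `B` can be implemented by
a depth-3 rectifier circuit with `O(m²) = O(n)` edges: `OR₃(B̄) = O(m²)`. -/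
theorem stmt10 : ∃ c : ℕ, ∀ (m : ℕ) (A : Fin m → Fin m → Bool),
    ORd 3 (fun a b => !derivedB A a b) ≤ c * m ^ 2 := by
  classical
  refine ⟨4, fun m A => ?_⟩
  obtain ⟨e⟩ := Fintype.truncEquivFin (Stmt10Aux.Node m)
  have hmem : (Stmt10Aux.circ e A).edges.card ∈ {k | ∃ C : RectCircuit (Pairs m) (Pairs m),
      C.implements (fun a b => !derivedB A a b) ∧ C.depthLE 3 ∧ C.edges.card = k} :=
    ⟨Stmt10Aux.circ e A, Stmt10Aux.impl e A, Stmt10Aux.depth3 e A, rfl⟩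
  exact le_trans (Nat.sInf_le hmem) (Stmt10Aux.card_edges e A)
end

section
/- If A is a 3-free m×m Boolean matrix with |A| ≥ c·m^{5/3} for a constant c > 0 (and m large enough that |A| ≥ 2m^{3/2}), then the derived 2-rectangle matrix B of size n = C(m,2) satisfies |B| ≥ |A|⁴/(32 m⁴) = Ω(m^{8/3}) = Ω(n^{4/3}). -/
open Finset

lemma count_pairs_subset {m : ℕ} (S : Finset (Fin m)) :
    (univ.filter (fun b : Pairs m => b.1 ⊆ S)).card = S.card.choose 2 := by
  rw [← Finset.card_powersetCard]
  apply Finset.card_bij (fun b _ => b.1)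
  · intro b hb
    rw [Finset.mem_powersetCard]
    exact ⟨(Finset.mem_filter.mp hb).2, b.2⟩
  · intro b _ b' _ h; exact Subtype.ext h
  · intro t ht
    rw [Finset.mem_powersetCard] at ht
    exact ⟨⟨t, ht.2⟩, by simp [ht.1], rfl⟩

lemma conv_real {ι : Type} [Fintype ι] (f : ι → ℕ) :
    ((∑ i, f i : ℕ) : ℝ)^2 ≤
      (Fintype.card ι) * (2 * ((∑ i, (f i).choose 2 : ℕ) : ℝ) + ((∑ i, f i : ℕ) : ℝ)) := by
  have key : ∀ t : ℕ, 2 * (t.choose 2 : ℝ) + t = (t : ℝ)^2 := by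
    intro t
    rw [Nat.cast_choose_two]
    ring
  push_cast
  calc (∑ i, (f i : ℝ))^2 ≤ (Finset.univ.card : ℝ) * ∑ i, (f i : ℝ)^2 :=
        sq_sum_le_card_mul_sum_sq
    _ = (Fintype.card ι) * (2 * (∑ i, ((f i).choose 2 : ℝ)) + ∑ i, (f i : ℝ)) := by
        rw [Finset.card_univ]
        congr 1
        rw [Finset.mul_sum, ← Finset.sum_add_distrib]
        exact Finset.sum_congr rfl fun i _ => (key (f i)).symm

def rowSetS {m : ℕ} (A : Fin m → Fin m → Bool) (a : Finset (Fin m)) : Finset (Fin m) :=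
  univ.filter (fun j => ∀ i ∈ a, A i j = true)

def colS {m : ℕ} (A : Fin m → Fin m → Bool) (j : Fin m) : Finset (Fin m) :=
  univ.filter (fun i => A i j = true)

lemma weightB_eq {m : ℕ} (A : Fin m → Fin m → Bool) :
    weight (derivedB A) = ∑ a : Pairs m, (rowSetS A a.1).card.choose 2 := by
  unfold weight
  rw [Finset.card_filter, Fintype.sum_prod_type]
  refine Finset.sum_congr rfl fun a _ => ?_
  rw [← Finset.card_filter, ← count_pairs_subset (rowSetS A a.1)]
  congr 1
  apply Finset.filter_congr
  intro b _
  simp only [derivedB, decide_eq_true_eq, rowSetS]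
  constructor
  · intro h j hj
    simp only [Finset.mem_filter, Finset.mem_univ, true_and]
    intro i hi; exact h i hi j hj
  · intro h i hi j hj
    have := h hj
    simp only [Finset.mem_filter] at this
    exact this.2 i hi

lemma sumS_eq {m : ℕ} (A : Fin m → Fin m → Bool) :
    ∑ a : Pairs m, (rowSetS A a.1).card = ∑ j : Fin m, (colS A j).card.choose 2 := by
  have h : ∀ a : Pairs m, (rowSetS A a.1).card
      = ∑ j : Fin m, if a.1 ⊆ colS A j then 1 else 0 := by
    intro a
    rw [← Finset.card_filter]
    congr 1
    apply Finset.filter_congr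
    intro j _
    simp only [rowSetS, colS]
    constructor
    · intro h i hi
      simp only [Finset.mem_filter, Finset.mem_univ, true_and]
      exact h i hi
    · intro h i hi
      have := h hi
      simpa using this
  simp only [h]
  rw [Finset.sum_comm]
  refine Finset.sum_congr rfl fun j _ => ?_
  rw [← Finset.card_filter, count_pairs_subset]

lemma weightA_eq {m : ℕ} (A : Fin m → Fin m → Bool) :
    weight A = ∑ j : Fin m, (colS A j).card := by
  unfold weight
  rw [Finset.card_filter, Fintype.sum_prod_type, Finset.sum_comm]
  refine Finset.sum_congr rfl fun j _ => ?_
  rw [← Finset.card_filter]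
  rfl

lemma cardPairs (m : ℕ) : Fintype.card (Pairs m) = m.choose 2 := by
  rw [Fintype.card_subtype, ← Finset.powerset_univ, ← Finset.powersetCard_eq_filter,
    Finset.card_powersetCard, Finset.card_univ, Fintype.card_fin]

lemma alg_bound (M w P Q : ℝ) (hM1 : 1 ≤ M) (hw0 : 0 ≤ w) (hP0 : 0 ≤ P) (hQ0 : 0 ≤ Q)
    (C1 : w^2 ≤ M * (2*P + w)) (C2 : P^2 ≤ M^2/2 * (2*Q + P))
    (hw2 : 2 * M^((3:ℝ)/2) ≤ w) :
    w^4 ≤ 32 * M^4 * Q := by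
  have hM0 : (0:ℝ) < M := lt_of_lt_of_le one_pos hM1
  have h32 : M ≤ M^((3:ℝ)/2) := by
    calc M = M^(1:ℝ) := (Real.rpow_one M).symm
      _ ≤ M^((3:ℝ)/2) := Real.rpow_le_rpow_of_exponent_le hM1 (by norm_num)
  have hw2M : 2*M ≤ w := by linarith
  have e1 : M^((3:ℝ)/2) * M^((3:ℝ)/2) = M^3 := by
    rw [← Real.rpow_add hM0]
    norm_num
  have hwsq : 4*M^3 ≤ w^2 := by
    nlinarith [hw2, e1, Real.rpow_nonneg hM0.le ((3:ℝ)/2)]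
  have hPM : w^2 ≤ 4*P*M := by
    nlinarith [C1, mul_nonneg (by linarith : (0:ℝ) ≤ w - 2*M) hw0]
  have hPm2 : M^2 ≤ P := by nlinarith [hPM, hwsq, hM0]
  have hQ2 : P^2 ≤ 2*M^2*Q := by
    nlinarith [C2, mul_nonneg (sub_nonneg.2 hPm2) hP0]
  have h1 : w^4 ≤ 16*P^2*M^2 := by
    nlinarith [mul_self_le_mul_self (sq_nonneg w) hPM]
  nlinarith [h1, mul_le_mul_of_nonneg_left hQ2 (by positivity : (0:ℝ) ≤ 16*M^2)]

lemma alg_bound2 (M w Q c : ℝ) (hM1 : 1 ≤ M) (hc : 0 < c) (hQ0 : 0 ≤ Q) (hw0 : 0 ≤ w)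
    (hmain : w^4 ≤ 32*M^4*Q) (hw : c*M^((5:ℝ)/3) ≤ w) :
    c^4 * M^((8:ℝ)/3) / 32 ≤ Q := by
  have hM0 : (0:ℝ) < M := lt_of_lt_of_le one_pos hM1
  have hw4 : (c*M^((5:ℝ)/3))^4 ≤ w^4 := by
    apply pow_le_pow_left₀ _ hw 4
    exact mul_nonneg hc.le (Real.rpow_nonneg hM0.le _)
  have e2 : (c*M^((5:ℝ)/3))^4 = c^4 * (M^((8:ℝ)/3) * M^4) := by
    rw [mul_pow, ← Real.rpow_natCast (M ^ ((5:ℝ)/3)) 4, ← Real.rpow_mul hM0.le,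
        ← Real.rpow_natCast M 4, ← Real.rpow_add hM0]
    norm_num
  have hc4 : c^4 * (M^((8:ℝ)/3) * M^4) ≤ w^4 := e2 ▸ hw4
  rw [div_le_iff₀ (by norm_num : (0:ℝ) < 32)]
  nlinarith [hmain, hc4, pow_pos hM0 4]

/-- If `A` is 3-free with `|A| ≥ c·m^{5/3}` (and `|A| ≥ 2 m^{3/2}`),
then `|B| ≥ |A|⁴/(32 m⁴) ≥ c⁴ m^{8/3} / 32`, i.e. `|B| = Ω(n^{4/3})`. -/
theorem stmt14 (m : ℕ) (c : ℝ) (hc : 0 < c) (A : Fin m → Fin m → Bool)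
    (h3 : kFree A 3)
    (hw : (weight A : ℝ) ≥ c * (m : ℝ) ^ ((5 : ℝ) / 3))
    (hw2 : (weight A : ℝ) ≥ 2 * (m : ℝ) ^ ((3 : ℝ) / 2)) :
    (weight (derivedB A) : ℝ) ≥ (weight A : ℝ) ^ 4 / (32 * (m : ℝ) ^ 4) ∧
    (weight (derivedB A) : ℝ) ≥ c ^ 4 * (m : ℝ) ^ ((8 : ℝ) / 3) / 32 := by
  rcases Nat.eq_zero_or_pos m with hm | hm
  · subst hm
    have hA0 : weight A = 0 := by simp [weight]
    constructor
    · rw [hA0]; norm_num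
    · have h0 : ((0:ℕ):ℝ) ^ ((8:ℝ)/3) = 0 := by
        rw [Nat.cast_zero, Real.zero_rpow (by norm_num)]
      rw [h0]; norm_num
  · have hM1 : (1:ℝ) ≤ (m:ℝ) := by exact_mod_cast hm
    have hM0 : (0:ℝ) < (m:ℝ) := lt_of_lt_of_le one_pos hM1
    have hwN := weightA_eq A
    have hPN := sumS_eq A
    have hQN := weightB_eq A
    have hw0 : (0:ℝ) ≤ (weight A : ℝ) := Nat.cast_nonneg _
    have hP0 : (0:ℝ) ≤ ((∑ a : Pairs m, (rowSetS A a.1).card : ℕ) : ℝ) := Nat.cast_nonneg _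
    have hQ0 : (0:ℝ) ≤ (weight (derivedB A) : ℝ) := Nat.cast_nonneg _
    have C1 : ((weight A : ℕ):ℝ)^2
        ≤ (m:ℝ) * (2*((∑ a : Pairs m, (rowSetS A a.1).card : ℕ):ℝ) + (weight A:ℝ)) := by
      have h := conv_real (fun j : Fin m => (colS A j).card)
      rw [Fintype.card_fin, ← hwN, ← hPN] at h
      exact h
    have C2 : ((∑ a : Pairs m, (rowSetS A a.1).card : ℕ):ℝ)^2
        ≤ (m.choose 2 : ℝ) * (2*(weight (derivedB A):ℝ)
            + ((∑ a : Pairs m, (rowSetS A a.1).card : ℕ):ℝ)) := by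
      have h := conv_real (fun a : Pairs m => (rowSetS A a.1).card)
      rw [cardPairs m, ← hQN] at h
      exact h
    have hN : (m.choose 2 : ℝ) ≤ (m:ℝ)^2/2 := by
      rw [Nat.cast_choose_two]
      nlinarith [hM1]
    have C2' := le_trans C2 (mul_le_mul_of_nonneg_right hN (by linarith))
    have hmain := alg_bound (m:ℝ) (weight A : ℝ)
      ((∑ a : Pairs m, (rowSetS A a.1).card : ℕ) : ℝ) (weight (derivedB A) : ℝ)
      hM1 hw0 hP0 hQ0 C1 C2' hw2
    constructor
    · rw [ge_iff_le, div_le_iff₀ (mul_pos (by norm_num : (0:ℝ) < 32) (pow_pos hM0 4))]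
      nlinarith [hmain]
    · exact alg_bound2 (m:ℝ) (weight A : ℝ) (weight (derivedB A) : ℝ) c
        hM1 hc hQ0 hw0 hmain hw
end
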